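/- Let H(t,x,y) := (4πt)^{-1}·exp(−‖x−y‖²/(4t)) and let N(t,x,y) := y·∇_y H(t,x,y) for t > 0, extended by N(t,x,y) := 0 for t ≤ 0. There is a constant C > 0 such that for every t ∈ (0,1], every x ∈ S¹, and every bounded measurable function g : (0,∞) × S¹ → ℝ, | ∫₀^t ∫_{S¹} g(s,y)·N(t−s,x,y) dσ(y) ds | ≤ C·t^{1/2}·sup|g|. (This is the bound |Ng(t,x)| ≤ C t^{1/2} ‖g‖_{L^∞} for the boundary double-layer heat potential operator N.) -/

import Mathlib

open Metric Set MeasureTheory Filter Real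
open scoped RealInnerProductSpace MeasureTheory

noncomputable section

/-- The plane `ℝ²`, as a Euclidean space. -/
abbrev E2 := EuclideanSpace ℝ (Fin 2)

/-- Counterclockwise rotation of `x` by `90°`:  `x^⊥ = (-x₂, x₁)`. -/
def perp (x : E2) : E2 := WithLp.toLp 2 ![-(x 1), x 0]

/-- The two-dimensional heat kernel `H(t,x,y) = (4πt)⁻¹ exp(-‖x-y‖²/(4t))`. -/
def heatK (t : ℝ) (x y : E2) : ℝ := (4 * π * t)⁻¹ * Real.exp (-‖x - y‖^2 / (4 * t))

/-- The kernel `N(t,x,y) = y ⬝ ∇_y H(t,x,y)` for `t > 0`, extended by `0` for `t ≤ 0`. -/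
def NkerExt (t : ℝ) (x y : E2) : ℝ :=
  if 0 < t then ⟪y, gradient (fun z => heatK t x z) y⟫ else 0


section Aux

lemma gradient_heatK {t : ℝ} (ht : 0 < t) (x y : E2) :
    gradient (fun z => heatK t x z) y
      = ((8 * π * t^2)⁻¹ * Real.exp (-‖x - y‖^2 / (4 * t))) • (x - y) := by
  have h1 : HasFDerivAt (fun z : E2 => x - z) (-(ContinuousLinearMap.id ℝ E2)) y :=
    (hasFDerivAt_id y).const_sub x
  have h2 := h1.norm_sq
  have h3 := h2.mul_const (-(4*t)⁻¹)
  have h4 := (Real.hasDerivAt_exp (‖x - y‖^2 * (-(4*t)⁻¹))).comp_hasFDerivAt y h3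
  have h5 := h4.const_mul ((4 * π * t)⁻¹)
  have key : HasGradientAt (fun z => heatK t x z)
      (((8 * π * t^2)⁻¹ * Real.exp (-‖x - y‖^2 / (4 * t))) • (x - y)) y := by
    rw [hasGradientAt_iff_hasFDerivAt]
    have heq : (fun z : E2 => heatK t x z)
        = fun z => (4 * π * t)⁻¹ * Real.exp (‖x - z‖^2 * (-(4*t)⁻¹)) := by
      funext z
      simp only [heatK]
      ring_nf
    rw [heq]
    refine h5.congr_fderiv ?_
    ext v
    have hπ := Real.pi_pos
    simp only [InnerProductSpace.toDual_apply_apply, ContinuousLinearMap.smul_apply,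
      ContinuousLinearMap.comp_apply, ContinuousLinearMap.neg_apply,
      ContinuousLinearMap.id_apply, innerSL_apply_apply, real_inner_smul_left, smul_eq_mul]
    rw [inner_neg_right]
    have : (-‖x - y‖ ^ 2 / (4 * t)) = ‖x - y‖ ^ 2 * (-(4 * t)⁻¹) := by ring
    rw [this]
    field_simp
    ring
  exact key.gradient

lemma NkerExt_eq {t : ℝ} (ht : 0 < t) (x y : E2) :
    NkerExt t x y = ((8 * π * t^2)⁻¹ * Real.exp (-‖x - y‖^2 / (4 * t))) * ⟪y, x - y⟫ := by
  rw [NkerExt, if_pos ht, gradient_heatK ht, real_inner_smul_right]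

lemma inner_sphere {x y : E2} (hx : ‖x‖ = 1) (hy : ‖y‖ = 1) :
    ⟪y, x - y⟫ = -‖x - y‖^2 / 2 := by
  have h := @norm_sub_sq_real E2 _ _ x y
  rw [inner_sub_right, real_inner_self_eq_norm_sq, real_inner_comm, hy]
  rw [hx, hy] at h
  norm_num at h ⊢
  linarith

lemma z_le_exp_half {z : ℝ} (hz : 0 ≤ z) : z ≤ Real.exp (z / 2) := by
  have h := Real.add_one_le_exp (z / 4)
  have h2 : Real.exp (z/2) = Real.exp (z/4) * Real.exp (z/4) := by
    rw [← Real.exp_add]; ring_nf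
  have hsq : (z/4+1)*(z/4+1) ≤ Real.exp (z/4) * Real.exp (z/4) :=
    mul_self_le_mul_self (by linarith) h
  nlinarith [sq_nonneg (1 - z/4), hsq]

lemma NkerExt_bound {t : ℝ} (ht : 0 < t) {x y : E2} (hx : ‖x‖ = 1) (hy : ‖y‖ = 1) :
    |NkerExt t x y| ≤ (4 * π * t)⁻¹ * Real.exp (-‖x - y‖^2 / (8 * t)) := by
  rw [NkerExt_eq ht, inner_sphere hx hy]
  set r2 := ‖x - y‖^2 with hr2
  have hr2' : 0 ≤ r2 := sq_nonneg _
  have hπ := Real.pi_pos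
  have hA : |((8 * π * t^2)⁻¹ * Real.exp (-r2 / (4*t))) * (-r2/2)|
      = r2 / (16 * π * t^2) * Real.exp (-r2 / (4*t)) := by
    rw [abs_mul, abs_mul, abs_of_pos (by positivity : (0:ℝ) < (8 * π * t^2)⁻¹),
      abs_of_pos (Real.exp_pos _), abs_div, abs_neg, abs_of_nonneg hr2', abs_of_pos two_pos]
    field_simp
    ring
  rw [hA]
  have hz : 0 ≤ r2 / (4*t) := by positivity
  have key := z_le_exp_half hz
  have e1 : Real.exp (-r2/(4*t)) = (Real.exp (r2/(4*t)))⁻¹ := by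
    rw [← Real.exp_neg]; ring_nf
  have e2 : Real.exp (-r2/(8*t)) = (Real.exp (r2/(4*t)/2))⁻¹ := by
    rw [← Real.exp_neg]; ring_nf
  rw [e1, e2]
  set F := Real.exp (r2 / (4 * t) / 2) with hF'
  have hF : 0 < F := Real.exp_pos _
  have h22 : Real.exp (r2/(4*t)) = F * F := by
    rw [hF', ← Real.exp_add]; ring_nf
  rw [h22]
  have hkey' : r2 ≤ 4 * t * F := by
    rw [div_le_iff₀ (by positivity)] at key; linarith
  have hπ0 : π ≠ 0 := ne_of_gt hπ
  have ht0 : t ≠ 0 := ne_of_gt ht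
  have hF0 : F ≠ 0 := ne_of_gt hF
  have e3 : (4 * π * t)⁻¹ * F⁻¹ = F / (4 * π * t * (F * F)) := by
    field_simp
  have e4 : r2 / (16 * π * t ^ 2) * (F * F)⁻¹ = r2 / (16 * π * t ^ 2 * (F * F)) := by
    field_simp; try ring
  rw [e3, e4, div_le_div_iff₀ (by positivity) (by positivity)]
  have := mul_le_mul_of_nonneg_right hkey' (by positivity : (0:ℝ) ≤ 4*π*t*(F*F))
  nlinarith [this]

/-- parametrization of the circle adapted to `x`. -/
def cpar (x : E2) (θ : ℝ) : E2 :=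
  (WithLp.equiv 2 (Fin 2 → ℝ)).symm
    ![x 0 * Real.cos θ - x 1 * Real.sin θ, x 1 * Real.cos θ + x 0 * Real.sin θ]

lemma cpar_apply0 (x : E2) (θ : ℝ) :
    cpar x θ 0 = x 0 * Real.cos θ - x 1 * Real.sin θ := rfl
lemma cpar_apply1 (x : E2) (θ : ℝ) :
    cpar x θ 1 = x 1 * Real.cos θ + x 0 * Real.sin θ := rfl

lemma inner_epair (a b : E2) : ⟪a, b⟫ = a 0 * b 0 + a 1 * b 1 := by
  simp [PiLp.inner_apply, Fin.sum_univ_two, RCLike.inner_apply, conj_trivial]; ring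

lemma norm_sq_epair (a : E2) : ‖a‖^2 = a 0^2 + a 1^2 := by
  rw [← real_inner_self_eq_norm_sq, inner_epair]; ring

lemma norm_one_iff (a : E2) : ‖a‖ = 1 ↔ a 0^2 + a 1^2 = 1 := by
  constructor
  · intro h
    have := norm_sq_epair a
    rw [h] at this; linarith
  · intro h
    have h2 : ‖a‖^2 = 1 := by rw [norm_sq_epair]; exact h
    rw [← Real.sqrt_one, ← h2, Real.sqrt_sq (norm_nonneg _)]

section
variable {x : E2} (hx1 : x 0^2 + x 1^2 = 1)

include hx1

lemma norm_cpar (θ : ℝ) : ‖cpar x θ‖ = 1 := by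
  rw [norm_one_iff, cpar_apply0, cpar_apply1]
  have h := Real.sin_sq_add_cos_sq θ
  nlinarith [hx1, h]

lemma inner_cpar (θ₁ θ₂ : ℝ) : ⟪cpar x θ₁, cpar x θ₂⟫ = Real.cos (θ₁ - θ₂) := by
  rw [inner_epair, cpar_apply0, cpar_apply1, cpar_apply0, cpar_apply1, Real.cos_sub]
  linear_combination (Real.cos θ₁ * Real.cos θ₂ + Real.sin θ₁ * Real.sin θ₂) * hx1

lemma norm_sub_cpar (θ₁ θ₂ : ℝ) :
    ‖cpar x θ₁ - cpar x θ₂‖^2 = 2 - 2 * Real.cos (θ₁ - θ₂) := by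
  have h := @norm_sub_sq_real E2 _ _ (cpar x θ₁) (cpar x θ₂)
  rw [norm_cpar hx1, norm_cpar hx1, inner_cpar hx1] at h
  linarith

omit hx1 in
lemma two_sub_cos_le (u : ℝ) : 2 - 2 * Real.cos u ≤ u^2 := by
  have h1 : Real.cos u = 1 - 2 * Real.sin (u/2)^2 := by
    have h := Real.cos_two_mul (u/2)
    have h2 := Real.sin_sq_add_cos_sq (u/2)
    have : 2 * (u/2) = u := by ring
    rw [this] at h
    linarith
  have h2 : |Real.sin (u/2)| ≤ |u/2| := Real.abs_sin_le_abs
  have h3 : Real.sin (u/2)^2 ≤ (u/2)^2 := by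
    rw [← sq_abs, ← sq_abs (u/2)]
    exact pow_le_pow_left₀ (abs_nonneg _) h2 2
  nlinarith

lemma lipschitz_cpar : LipschitzWith 1 (cpar x) := by
  apply LipschitzWith.of_dist_le_mul
  intro θ₁ θ₂
  rw [dist_eq_norm, Real.dist_eq, NNReal.coe_one, one_mul]
  have h1 : ‖cpar x θ₁ - cpar x θ₂‖^2 ≤ (θ₁ - θ₂)^2 := by
    rw [norm_sub_cpar hx1]
    exact two_sub_cos_le _
  calc ‖cpar x θ₁ - cpar x θ₂‖ = Real.sqrt (‖cpar x θ₁ - cpar x θ₂‖^2) := by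
        rw [Real.sqrt_sq (norm_nonneg _)]
    _ ≤ Real.sqrt ((θ₁ - θ₂)^2) := Real.sqrt_le_sqrt h1
    _ = |θ₁ - θ₂| := Real.sqrt_sq_eq_abs _

lemma sphere_subset_cpar : sphere (0:E2) 1 ⊆ cpar x '' (Icc (-π) π) := by
  intro y hy
  have hy1 : y 0^2 + y 1^2 = 1 := by
    rw [← norm_one_iff]
    simpa using hy
  set c := x 0 * y 0 + x 1 * y 1 with hc
  set s := x 0 * y 1 - x 1 * y 0 with hs
  have hcs : c^2 + s^2 = 1 := by
    rw [hc, hs]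
    linear_combination (y 0^2 + y 1^2) * hx1 + hy1
  have hc1 : -1 ≤ c := by nlinarith [sq_nonneg s, sq_nonneg (c+1)]
  have hc2 : c ≤ 1 := by nlinarith [sq_nonneg s, sq_nonneg (c-1)]
  set θ := if 0 ≤ s then Real.arccos c else -Real.arccos c with hθ
  have hcosθ : Real.cos θ = c := by
    rw [hθ]; split_ifs <;> simp [Real.cos_arccos hc1 hc2]
  have hsinθ : Real.sin θ = s := by
    have hsa : Real.sin (Real.arccos c) = Real.sqrt (1 - c^2) := Real.sin_arccos c
    have h1c : 1 - c^2 = s^2 := by linarith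
    rw [hθ]; split_ifs with h
    · rw [hsa, h1c, Real.sqrt_sq h]
    · push_neg at h
      rw [Real.sin_neg, hsa, h1c, Real.sqrt_sq_eq_abs, abs_of_neg h, neg_neg]
  refine ⟨θ, ?_, ?_⟩
  · have h1 := Real.arccos_nonneg c
    have h2 := Real.arccos_le_pi c
    have h3 := Real.pi_pos
    rw [hθ]; split_ifs <;> constructor <;> linarith
  · refine PiLp.ext fun i => ?_
    fin_cases i
    · show cpar x θ 0 = y 0
      rw [cpar_apply0, hcosθ, hsinθ, hc, hs]
      linear_combination (y 0) * hx1
    · show cpar x θ 1 = y 1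
      rw [cpar_apply1, hcosθ, hsinθ, hc, hs]
      linear_combination (y 1) * hx1
end


section
variable {x : E2} (hx1 : x 0^2 + x 1^2 = 1)
include hx1 in
lemma measure_sphere_le :
    (μH[1] : Measure E2).restrict (sphere 0 1)
      ≤ Measure.map (cpar x) (volume.restrict (Icc (-π) π)) := by
  have hmeas : Measurable (cpar x) := (lipschitz_cpar hx1).continuous.measurable
  rw [Measure.le_iff]
  intro S hS
  rw [Measure.restrict_apply hS, Measure.map_apply hmeas hS,
    Measure.restrict_apply (hmeas hS)]
  have hsub : S ∩ sphere (0:E2) 1 ⊆ cpar x '' (cpar x ⁻¹' S ∩ Icc (-π) π) := by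
    rintro z ⟨hzS, hzs⟩
    obtain ⟨θ, hθ, hθz⟩ := sphere_subset_cpar hx1 hzs
    exact ⟨θ, ⟨by simp [mem_preimage, hθz, hzS], hθ⟩, hθz⟩
  refine le_trans (measure_mono hsub) ?_
  have h2 := (lipschitz_cpar hx1).hausdorffMeasure_image_le (zero_le_one)
    (cpar x ⁻¹' S ∩ Icc (-π) π)
  refine le_trans h2 ?_
  rw [MeasureTheory.hausdorffMeasure_real]
  simp

end

section
variable {x : E2} (hx1 : x 0^2 + x 1^2 = 1)

-- x = cpar x 0
lemma cpar_zero (x : E2) : cpar x 0 = x := by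
  refine PiLp.ext fun i => ?_
  fin_cases i
  · show x 0 * Real.cos 0 - x 1 * Real.sin 0 = x 0; simp
  · show x 1 * Real.cos 0 + x 0 * Real.sin 0 = x 1; simp

include hx1 in
lemma norm_sub_cpar' (θ : ℝ) : ‖x - cpar x θ‖^2 = 2 - 2 * Real.cos θ := by
  have h := norm_sub_cpar hx1 0 θ
  rw [cpar_zero, zero_sub, Real.cos_neg] at h
  exact h

lemma sin_sq_ge {θ : ℝ} (h1 : -π ≤ θ) (h2 : θ ≤ π) : (θ/π)^2 ≤ Real.sin (θ/2)^2 := by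
  have hπ := Real.pi_pos
  have habs' : |θ| ≤ π := abs_le.mpr ⟨h1, h2⟩
  have habs : |θ|/2 ≤ π/2 := by linarith
  have hms := Real.mul_le_sin (by positivity : (0:ℝ) ≤ |θ|/2) (by linarith)
  -- 2/π * (|θ|/2) = |θ|/π ≤ sin(|θ|/2)
  have key : |θ|/π ≤ Real.sin (|θ|/2) := by
    have : 2/π * (|θ|/2) = |θ|/π := by field_simp
    linarith [hms, this.symm.le]
  have hnn : 0 ≤ |θ|/π := by positivity
  have hsq : (|θ|/π)^2 ≤ Real.sin (|θ|/2)^2 := by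
    apply pow_le_pow_left₀ hnn key
  have e1 : (|θ|/π)^2 = (θ/π)^2 := by rw [div_pow, div_pow, sq_abs]
  have e2 : Real.sin (|θ|/2)^2 = Real.sin (θ/2)^2 := by
    rcases le_or_gt 0 θ with h | h
    · rw [abs_of_nonneg h]
    · rw [abs_of_neg h]
      have : -θ/2 = -(θ/2) := by ring
      rw [this, Real.sin_neg, neg_sq]
  rw [e1, e2] at hsq
  exact hsq

lemma two_sub_cos_ge {θ : ℝ} (h1 : -π ≤ θ) (h2 : θ ≤ π) :
    4 * θ^2 / π^2 ≤ 2 - 2 * Real.cos θ := by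
  have hπ := Real.pi_pos
  have hcos : Real.cos θ = 1 - 2 * Real.sin (θ/2)^2 := by
    have h := Real.cos_two_mul (θ/2)
    have h2' := Real.sin_sq_add_cos_sq (θ/2)
    have e : 2 * (θ/2) = θ := by ring
    rw [e] at h
    linarith
  have hs := sin_sq_ge h1 h2
  rw [div_pow] at hs
  rw [hcos]
  have hπ2 : (0:ℝ) < π^2 := by positivity
  rw [div_le_iff₀ hπ2] at hs ⊢
  nlinarith [hs]

/-- the key slice estimate -/
lemma slice_bound {τ : ℝ} (hτ : 0 < τ) {x : E2} (hx : ‖x‖ = 1) {M : ℝ} (hM : 0 ≤ M)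
    (G : E2 → ℝ) (hG : ∀ y ∈ sphere (0:E2) 1, |G y| ≤ M) :
    |∫ y in sphere (0:E2) 1, G y * NkerExt τ x y ∂(μH[1])|
      ≤ M * (Real.sqrt (2*π) / 4) * (Real.sqrt τ)⁻¹ := by
  have hπ := Real.pi_pos
  have hx1 : x 0^2 + x 1^2 = 1 := (norm_one_iff x).mp hx
  have hmeas : Measurable (cpar x) := (lipschitz_cpar hx1).continuous.measurable
  set ν := Measure.map (cpar x) (volume.restrict (Icc (-π) π)) with hν
  set Φ : E2 → ℝ := fun y => M * |NkerExt τ x y| with hΦdef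
  have hNcont : Continuous (fun y : E2 => NkerExt τ x y) := by
    have e : (fun y : E2 => NkerExt τ x y)
        = fun y => ((8*π*τ^2)⁻¹ * Real.exp (-‖x - y‖^2/(4*τ))) * ⟪y, x - y⟫ :=
      funext fun y => NkerExt_eq hτ x y
    rw [e]
    have h1 : Continuous (fun y : E2 => ⟪y, x - y⟫) :=
      continuous_id.inner (continuous_const.sub continuous_id)
    have h2 : Continuous (fun y : E2 => Real.exp (-‖x - y‖^2/(4*τ))) := by
      apply Real.continuous_exp.comp
      apply Continuous.div_const
      apply Continuous.neg
      exact ((continuous_const.sub continuous_id).norm.pow 2)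
    exact ((continuous_const.mul h2).mul h1)
  have hΦcont : Continuous Φ := by
    exact continuous_const.mul hNcont.abs
  have hΦν : Integrable Φ ν := by
    rw [hν, integrable_map_measure hΦcont.aestronglyMeasurable hmeas.aemeasurable]
    exact (hΦcont.comp (lipschitz_cpar hx1).continuous).integrableOn_Icc
  have hΦμ : Integrable Φ ((μH[1] : Measure E2).restrict (sphere 0 1)) :=
    hΦν.mono_measure (measure_sphere_le hx1)
  -- step 1: |∫ G N| ≤ ∫ Φ dμ₀
  have step1 : |∫ y in sphere (0:E2) 1, G y * NkerExt τ x y ∂(μH[1])|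
      ≤ ∫ y in sphere (0:E2) 1, Φ y ∂(μH[1]) := by
    rw [← Real.norm_eq_abs]
    refine le_trans (norm_integral_le_integral_norm _) ?_
    apply integral_mono_of_nonneg
    · exact Eventually.of_forall fun y => norm_nonneg _
    · exact hΦμ
    · filter_upwards [ae_restrict_mem ((isClosed_sphere : IsClosed (sphere (0:E2) 1)).measurableSet)]
        with y hy
      have := hG y hy
      rw [Real.norm_eq_abs, abs_mul]
      exact mul_le_mul_of_nonneg_right this (abs_nonneg _)
  -- step 2: change measure
  have step2 : ∫ y in sphere (0:E2) 1, Φ y ∂(μH[1]) ≤ ∫ y, Φ y ∂ν := by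
    apply integral_mono_measure (measure_sphere_le hx1)
    · exact Eventually.of_forall fun y => by positivity
    · exact hΦν
  -- step 3: compute over ν
  have step3 : ∫ y, Φ y ∂ν = ∫ θ in Icc (-π) π, Φ (cpar x θ) := by
    rw [hν, integral_map hmeas.aemeasurable hΦcont.aestronglyMeasurable]
  -- step 4: pointwise Gaussian bound on the parametrized integral
  set b : ℝ := (2*π^2*τ)⁻¹ with hb
  have hbpos : 0 < b := by positivity
  have hgauss_int : Integrable (fun θ : ℝ => Real.exp (-b * θ^2)) := integrable_exp_neg_mul_sq hbpos
  have step4 : ∫ θ in Icc (-π) π, Φ (cpar x θ)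
      ≤ ∫ θ in Icc (-π) π, M * (4*π*τ)⁻¹ * Real.exp (-b * θ^2) := by
    apply integral_mono_of_nonneg
    · exact Eventually.of_forall fun θ => by positivity
    · exact (Integrable.const_mul (hgauss_int.restrict) _)
    · filter_upwards [ae_restrict_mem measurableSet_Icc] with θ hθ
      obtain ⟨hθ1, hθ2⟩ := hθ
      have hcb := NkerExt_bound hτ hx (norm_cpar hx1 θ)
      have hns := norm_sub_cpar' hx1 θ
      have hcge := two_sub_cos_ge hθ1 hθ2
      have hexp : Real.exp (-‖x - cpar x θ‖^2 / (8*τ)) ≤ Real.exp (-b * θ^2) := by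
        apply Real.exp_le_exp.mpr
        rw [hns, hb]
        rw [div_le_iff₀ (by positivity : (0:ℝ) < 8*τ)] at *
        have : -(2 - 2*Real.cos θ) ≤ -(4*θ^2/π^2) := by linarith
        calc -(2 - 2*Real.cos θ) ≤ -(4*θ^2/π^2) := this
          _ = -(2*π^2*τ)⁻¹ * θ^2 * (8*τ) := by field_simp; ring
      have : Φ (cpar x θ) ≤ M * ((4*π*τ)⁻¹ * Real.exp (-b * θ^2)) := by
        rw [hΦdef]
        apply mul_le_mul_of_nonneg_left _ hM
        refine le_trans hcb ?_
        exact mul_le_mul_of_nonneg_left hexp (by positivity)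
      calc Φ (cpar x θ) ≤ M * ((4*π*τ)⁻¹ * Real.exp (-b * θ^2)) := this
        _ = M * (4*π*τ)⁻¹ * Real.exp (-b * θ^2) := by ring
  -- step 5: extend to ℝ and compute the Gaussian integral
  have step5 : ∫ θ in Icc (-π) π, M * (4*π*τ)⁻¹ * Real.exp (-b * θ^2)
      ≤ M * (4*π*τ)⁻¹ * Real.sqrt (π/b) := by
    rw [MeasureTheory.integral_const_mul, ← integral_gaussian b]
    apply mul_le_mul_of_nonneg_left _ (by positivity)
    apply setIntegral_le_integral hgauss_int
    exact Eventually.of_forall fun θ => (Real.exp_pos _).le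
  -- final arithmetic
  have harith : M * (4*π*τ)⁻¹ * Real.sqrt (π/b) = M * (Real.sqrt (2*π) / 4) * (Real.sqrt τ)⁻¹ := by
    have h1 : π / b = 2*π * π^2 * τ := by
      rw [hb]; field_simp
    rw [h1]
    rw [show 2*π*π^2*τ = (2*π) * π^2 * τ by ring]
    rw [Real.sqrt_mul (by positivity) τ, Real.sqrt_mul (by positivity) (π^2),
      Real.sqrt_sq hπ.le]
    have hsτ : 0 < Real.sqrt τ := Real.sqrt_pos.mpr hτ
    rw [show (4*π*τ)⁻¹ = (4*π*(Real.sqrt τ*Real.sqrt τ))⁻¹ by rw [Real.mul_self_sqrt hτ.le]]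
    field_simp
  rw [step3] at step2
  rw [harith] at step5
  linarith [step1, step2, step4, step5]


end

lemma sqrt_inv_eq_rpow {τ : ℝ} (hτ : 0 < τ) : (Real.sqrt τ)⁻¹ = τ ^ (-(1:ℝ)/2) := by
  rw [Real.sqrt_eq_rpow, ← Real.rpow_neg hτ.le]
  norm_num


end Aux

/-- The bound `|Ng(t,x)| ≤ C t^{1/2} ‖g‖_{L^∞}` for the boundary double-layer heat
potential: there is `C > 0` such that for every `t ∈ (0,1]`, `x ∈ S¹`, and every
bounded measurable `g` on `(0,∞) × S¹`,
`|∫₀^t ∫_{S¹} g(s,y) N(t-s,x,y) dσ(y) ds| ≤ C t^{1/2} sup|g|`. -/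
theorem stmt13 : ∃ C > (0:ℝ), ∀ t ∈ Ioc (0:ℝ) 1, ∀ x : E2, ‖x‖ = 1 →
    ∀ g : ℝ → E2 → ℝ, Measurable (fun p : ℝ × E2 => g p.1 p.2) →
    ∀ M : ℝ, (∀ s > (0:ℝ), ∀ y ∈ sphere (0:E2) 1, |g s y| ≤ M) →
    |∫ s in Ioo (0:ℝ) t, ∫ y in sphere (0:E2) 1, g s y * NkerExt (t - s) x y ∂(μH[1])|
      ≤ C * Real.sqrt t * M := by
  refine ⟨Real.sqrt (2*π), Real.sqrt_pos.mpr (by positivity), ?_⟩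
  rintro t ⟨ht0, ht1⟩ x hx g hgm M hbd
  have hπ := Real.pi_pos
  have hxs : x ∈ sphere (0:E2) 1 := by
    simpa [mem_sphere_iff_norm] using hx
  have hM0 : 0 ≤ M := le_trans (abs_nonneg _) (hbd 1 one_pos x hxs)
  set c : ℝ := M * (Real.sqrt (2*π) / 4) with hc
  have hc0 : 0 ≤ c := by positivity
  -- integrability of the bound
  have hι : IntegrableOn (fun s => c * (t-s) ^ (-(1:ℝ)/2)) (Ioo 0 t) volume := by
    have h2 := (intervalIntegral.intervalIntegrable_rpow' (r := -(1:ℝ)/2) (by norm_num)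
      (a := 0) (b := t)).comp_sub_left t
    simp only [sub_zero, sub_self] at h2
    have h3 := h2.symm
    rw [intervalIntegrable_iff_integrableOn_Ioo_of_le ht0.le] at h3
    exact h3.const_mul c
  -- value of the bound integral
  have hval : ∫ s in Ioo 0 t, c * (t-s) ^ (-(1:ℝ)/2) = c * (2 * Real.sqrt t) := by
    rw [MeasureTheory.integral_const_mul]
    congr 1
    rw [← MeasureTheory.integral_Ioc_eq_integral_Ioo,
      ← intervalIntegral.integral_of_le ht0.le]
    have := intervalIntegral.integral_comp_sub_left
      (a := 0) (b := t) (fun u : ℝ => u ^ (-(1:ℝ)/2)) t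
    rw [this]
    simp only [sub_zero, sub_self]
    rw [integral_rpow (Or.inl (by norm_num))]
    rw [Real.zero_rpow (by norm_num), Real.sqrt_eq_rpow]
    norm_num
    ring
  -- main comparison
  have hcomp : |∫ s in Ioo (0:ℝ) t, ∫ y in sphere (0:E2) 1, g s y * NkerExt (t - s) x y ∂(μH[1])|
      ≤ ∫ s in Ioo 0 t, c * (t-s) ^ (-(1:ℝ)/2) := by
    rw [← Real.norm_eq_abs]
    refine le_trans (norm_integral_le_integral_norm _) ?_
    apply integral_mono_of_nonneg
    · exact Eventually.of_forall fun s => norm_nonneg _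
    · exact hι
    · filter_upwards [ae_restrict_mem measurableSet_Ioo] with s hs
      obtain ⟨hs0, hst⟩ := hs
      have hτ : 0 < t - s := by linarith
      have := slice_bound hτ hx hM0 (g s) (fun y hy => hbd s hs0 y hy)
      rw [Real.norm_eq_abs]
      calc |∫ y in sphere (0:E2) 1, g s y * NkerExt (t - s) x y ∂(μH[1])|
          ≤ M * (Real.sqrt (2*π) / 4) * (Real.sqrt (t-s))⁻¹ := this
        _ = c * (t-s) ^ (-(1:ℝ)/2) := by rw [hc, sqrt_inv_eq_rpow hτ]
  rw [hval] at hcomp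
  refine le_trans hcomp ?_
  have h1 : c * (2 * Real.sqrt t) = Real.sqrt (2*π) / 2 * Real.sqrt t * M := by
    rw [hc]; ring
  rw [h1]
  nlinarith [Real.sqrt_nonneg (2*π), Real.sqrt_nonneg t, hM0,
    mul_nonneg (Real.sqrt_nonneg (2*π)) (mul_nonneg (Real.sqrt_nonneg t) hM0)]
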